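/- Let n, p, q be natural numbers with 1 ≤ n, 1 ≤ p, and n ≤ q. Then, as real numbers, (∏_{i=0}^{n−1} (q − i)) · p^n / (∏_{i=0}^{n−1} (p·q + i)) ≥ ((q − n + 1)/q)^n. Equivalently, q(q−1)⋯(q−n+1)·p^n / [(pq+n−1)(pq+n−2)⋯(pq)] ≥ ((q−n+1)/q)^n. -/
import Mathlib


/-- The key arithmetic bound in the proof of the dual de Finetti theorem:
`q(q−1)⋯(q−n+1)·p^n / [(pq)(pq+1)⋯(pq+n−1)] ≥ ((q−n+1)/q)^n`. -/
theorem falling_factorial_ratio_bound (n p q : ℕ) (hn : 1 ≤ n) (hp : 1 ≤ p) (hq : n ≤ q) :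
    (∏ i ∈ Finset.range n, ((q : ℝ) - i)) * (p : ℝ) ^ n /
        (∏ i ∈ Finset.range n, ((p : ℝ) * q + i)) ≥
      (((q : ℝ) - n + 1) / q) ^ n := by
  have hq1 : 1 ≤ q := le_trans hn hq
  have hqR : (1 : ℝ) ≤ (q : ℝ) := by exact_mod_cast hq1
  have hpR : (1 : ℝ) ≤ (p : ℝ) := by exact_mod_cast hp
  have hnqR : (n : ℝ) ≤ (q : ℝ) := by exact_mod_cast hq
  have hq0 : (0 : ℝ) < (q : ℝ) := lt_of_lt_of_le one_pos hqR
  -- reflect the denominator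
  have hden : (∏ i ∈ Finset.range n, ((p : ℝ) * q + i))
      = ∏ i ∈ Finset.range n, ((p : ℝ) * q + ((n : ℝ) - 1 - i)) := by
    rw [← Finset.prod_range_reflect (fun i => ((p : ℝ) * q + i)) n]
    refine Finset.prod_congr rfl (fun i hi => ?_)
    have hi' : i < n := Finset.mem_range.mp hi
    have : ((n - 1 - i : ℕ) : ℝ) = (n : ℝ) - 1 - i := by
      have : n - 1 - i = n - 1 - i := rfl
      push_cast [Nat.cast_sub (by omega : i ≤ n - 1), Nat.cast_sub (by omega : 1 ≤ n)]
      ring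
    rw [this]
  rw [hden]
  have hdenpos : ∀ i ∈ Finset.range n, (0 : ℝ) < (p : ℝ) * q + ((n : ℝ) - 1 - i) := by
    intro i hi
    have hi' : i < n := Finset.mem_range.mp hi
    have hiR : (i : ℝ) ≤ (n : ℝ) - 1 := by
      have : (i : ℝ) + 1 ≤ (n : ℝ) := by exact_mod_cast hi'
      linarith
    nlinarith
  have hmain : (∏ i ∈ Finset.range n, ((q : ℝ) - i)) * (p : ℝ) ^ n /
      (∏ i ∈ Finset.range n, ((p : ℝ) * q + ((n : ℝ) - 1 - i)))
      = ∏ i ∈ Finset.range n, ((p : ℝ) * ((q : ℝ) - i) / ((p : ℝ) * q + ((n : ℝ) - 1 - i))) := by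
    rw [Finset.prod_div_distrib, Finset.prod_mul_distrib, Finset.prod_const,
      Finset.card_range]
    ring
  have hpow : (((q : ℝ) - n + 1) / q) ^ n
      = ∏ _i ∈ Finset.range n, (((q : ℝ) - n + 1) / q) := by
    rw [Finset.prod_const, Finset.card_range]
  rw [hmain, ge_iff_le, hpow]
  apply Finset.prod_le_prod
  · intro i _
    apply div_nonneg <;> linarith
  · intro i hi
    have hi' : i < n := Finset.mem_range.mp hi
    have hiR : (i : ℝ) ≤ (n : ℝ) - 1 := by
      have : (i : ℝ) + 1 ≤ (n : ℝ) := by exact_mod_cast hi'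
      linarith
    have hi0 : (0 : ℝ) ≤ (i : ℝ) := Nat.cast_nonneg i
    have hd : (0 : ℝ) < (p : ℝ) * q + ((n : ℝ) - 1 - i) := hdenpos i hi
    rw [div_le_div_iff₀ hq0 hd]
    have h1 : (0 : ℝ) ≤ (n : ℝ) - 1 - i := by linarith
    have h2 : (0 : ℝ) ≤ (p : ℝ) * q - q + n - 1 := by nlinarith
    nlinarith [mul_nonneg h1 h2]
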